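/- Let p* > 0 and p : ℝᵖ → ℝ with 0 < p(θ̂) ≤ p* for θ̂ in a neighborhood U of θ*, F : ℝᵖ → ℝᵖ with F(U) ⊆ U, d ≥ 0 satisfying log p(F(θ̂)) ≥ log p(θ̂) + d(F(θ̂), θ̂), and suppose there exists μ ∈ (0,1) with p(θ̂) ≥ p* · exp(−d(F(θ̂), θ̂)/(1 − μ)) for all θ̂ ∈ U. Then for the iterates θ̂_k = F^[k](θ̂_0) with θ̂_0 ∈ U, log p* − log p(θ̂_k) ≤ (log p* − log p(θ̂_0)) · μ^k for all k. -/
import Mathlib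


/-- Quadratic/Q-linear convergence of the log-posterior (Theorem 9): under the
EM ascent property and the condition `p θ̂ ≥ p* exp(−d(F θ̂, θ̂)/(1−μ))`,
the log-posterior gap decays geometrically with rate `μ`. -/
theorem em_qlinear_log_posterior {n : ℕ}
    (F : EuclideanSpace ℝ (Fin n) → EuclideanSpace ℝ (Fin n))
    (θstar : EuclideanSpace ℝ (Fin n))
    (P : EuclideanSpace ℝ (Fin n) → ℝ) (pstar : ℝ) (hpstar : 0 < pstar)
    (U : Set (EuclideanSpace ℝ (Fin n))) (hU : U ∈ nhds θstar)
    (hPpos : ∀ θhat ∈ U, 0 < P θhat)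
    (hPle : ∀ θhat ∈ U, P θhat ≤ pstar)
    (hinv : Set.MapsTo F U U)
    (d : EuclideanSpace ℝ (Fin n) → EuclideanSpace ℝ (Fin n) → ℝ)
    (hd : ∀ θ θ', 0 ≤ d θ θ')
    (hascent : ∀ θhat ∈ U,
      Real.log (P (F θhat)) ≥ Real.log (P θhat) + d (F θhat) θhat)
    (μ : ℝ) (hμ : μ ∈ Set.Ioo (0 : ℝ) 1)
    (hcond : ∀ θhat ∈ U,
      P θhat ≥ pstar * Real.exp (-(d (F θhat) θhat) / (1 - μ))) :
    ∀ θhat0 ∈ U, ∀ k : ℕ,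
      Real.log pstar - Real.log (P (F^[k] θhat0)) ≤
        (Real.log pstar - Real.log (P θhat0)) * μ ^ k := by
  obtain ⟨hμ0, hμ1⟩ := hμ
  have h1μ : 0 < 1 - μ := by linarith
  -- key step: one-step contraction
  have key : ∀ θ ∈ U, Real.log pstar - Real.log (P (F θ)) ≤
      μ * (Real.log pstar - Real.log (P θ)) := by
    intro θ hθ
    have hc := hcond θ hθ
    have hlogc : Real.log pstar + (-(d (F θ) θ) / (1 - μ)) ≤ Real.log (P θ) := by
      have := Real.log_le_log (by positivity) hc
      rwa [Real.log_mul (ne_of_gt hpstar) (Real.exp_ne_zero _), Real.log_exp] at this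
    rw [neg_div] at hlogc
    have hVd : (1 - μ) * (Real.log pstar - Real.log (P θ)) ≤ d (F θ) θ := by
      have : Real.log pstar - Real.log (P θ) ≤ d (F θ) θ / (1 - μ) := by linarith
      calc (1 - μ) * (Real.log pstar - Real.log (P θ))
          ≤ (1 - μ) * (d (F θ) θ / (1 - μ)) := by
            exact mul_le_mul_of_nonneg_left this (le_of_lt h1μ)
        _ = d (F θ) θ := by field_simp
    have ha := hascent θ hθ
    nlinarith
  intro θhat0 hθ0 k
  induction k with
  | zero => simp
  | succ k ih =>
    have hmem : F^[k] θhat0 ∈ U := hinv.iterate k hθ0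
    rw [Function.iterate_succ_apply']
    calc Real.log pstar - Real.log (P (F (F^[k] θhat0)))
        ≤ μ * (Real.log pstar - Real.log (P (F^[k] θhat0))) := key _ hmem
      _ ≤ μ * ((Real.log pstar - Real.log (P θhat0)) * μ ^ k) :=
          mul_le_mul_of_nonneg_left ih (le_of_lt hμ0)
      _ = (Real.log pstar - Real.log (P θhat0)) * μ ^ (k + 1) := by ring
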